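/- Let N(n) count clans in {+,•}ⁿ with J(c) = ∅ and N(n,j) count those with additionally h_n(c) = j. Then N(n) = 2·N(n-1) if n is odd, and N(n) = 4·N(n-2) - N(n-2, n-2) if n is even. -/
import Mathlib


/-- A clan of length `n` is a string in `{+, •}ⁿ`, encoded as `Fin n → Bool`
with `true` representing `+` and `false` representing `•` (a number). -/
abbrev Clan (n : ℕ) := Fin n → Bool

/-- The sequence `h_j` attached to a clan `c = (c₁, …, c_n)`: `h₀ = 0`, and
`h_j = h_{j-1}` if `c_{n-j+1} = •`, `h_j = h_{j-1} + 1` if `c_{n-j+1} = +` and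
`h_{j-1} = j - 1`, `h_j = h_{j-1} + 2` if `c_{n-j+1} = +` and `h_{j-1} ≤ j - 2`.
(Indices of `c` are 1-indexed in the informal description; here `c_{n-j+1}`
is the entry of `c : Fin n → Bool` at the 0-indexed position `n - j`.) -/
def hseq (n : ℕ) (c : Clan n) : ℕ → ℕ
  | 0 => 0
  | j + 1 =>
    let p := hseq n c j
    if hj : n - (j + 1) < n then
      if c ⟨n - (j + 1), hj⟩ = false then p
      else if p = j then p + 1
      else if p + 1 ≤ j then p + 2
      else p
    else p

/-- `J(c)`: the set of odd `j` with `1 ≤ j ≤ n - 1` such that `h_j(c) = j` and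
`c_{n-j} = •` (1-indexed), i.e. the entry at 0-indexed position `n - j - 1` is `•`. -/
def Jset (n : ℕ) (c : Clan n) : Set ℕ :=
  {j | j % 2 = 1 ∧ 1 ≤ j ∧ j ≤ n - 1 ∧ hseq n c j = j ∧
    ∀ h : n - j - 1 < n, c ⟨n - j - 1, h⟩ = false}

/-- The recursively defined set `D(c)` of clans indexing the terms of the
characteristic cycle of `L_c`: for a clan of length `0` (hence for length `1`)
it is the singleton `{c}`; `D((+, c')) = {(+, d') : d' ∈ D(c')}`;
`D((•, c')) = {(•, d') : d' ∈ D(c')}` unless `n` is even and `h_{n-1}(c') = n-1`,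
in which case `D((•, c')) = {(•, d') : d' ∈ D(c')} ∪ {(+, d') : d' ∈ D(c')}`. -/
def Dset : (n : ℕ) → Clan n → Set (Clan n)
  | 0, c => {c}
  | n + 1, c =>
    let c' : Clan n := fun i => c i.succ
    if c 0 = true then
      {d | d 0 = true ∧ (fun i : Fin n => d i.succ) ∈ Dset n c'}
    else if (n + 1) % 2 = 0 ∧ hseq n c' n = n then
      {d | (fun i : Fin n => d i.succ) ∈ Dset n c'}
    else
      {d | d 0 = false ∧ (fun i : Fin n => d i.succ) ∈ Dset n c'}

/-- `N(n)`: the number of clans of length `n` with `J(c) = ∅`, i.e. whose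
characteristic cycle is irreducible. -/
noncomputable def Ncount (n : ℕ) : ℕ :=
  {c : Clan n | Jset n c = ∅}.ncard

/-- `N(n, j)`: the number of clans of length `n` with `J(c) = ∅` and `h_n(c) = j`. -/
noncomputable def Ncj (n j : ℕ) : ℕ :=
  {c : Clan n | Jset n c = ∅ ∧ hseq n c n = j}.ncard

section AuxLemmas

lemma hseq_succ (n : ℕ) (hn : 0 < n) (c : Clan n) (j : ℕ) :
    hseq n c (j+1) =
      if c ⟨n - (j+1), by omega⟩ = false then hseq n c j
      else if hseq n c j = j then hseq n c j + 1
      else if hseq n c j + 1 ≤ j then hseq n c j + 2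
      else hseq n c j := by
  rw [hseq]
  simp only [dif_pos (show n - (j+1) < n by omega)]

lemma hseq_le (n : ℕ) (c : Clan n) : ∀ j, hseq n c j ≤ j := by
  intro j
  induction j with
  | zero => rfl
  | succ j ih =>
    rw [hseq]
    split
    · split
      · omega
      · split
        · omega
        · split <;> omega
    · omega

lemma hseq_tail (n : ℕ) (c : Clan (n+1)) :
    ∀ j, j ≤ n → hseq (n+1) c j = hseq n (fun i => c i.succ) j := by
  intro j
  induction j with
  | zero => intro _; rfl
  | succ j ih =>
    intro hj
    have h1 : 0 < n + 1 := Nat.succ_pos n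
    have h2 : 0 < n := by omega
    rw [hseq_succ (n+1) h1 c j, hseq_succ n h2 _ j, ih (by omega)]
    have hent : c ⟨n + 1 - (j+1), by omega⟩
        = (fun i : Fin n => c i.succ) ⟨n - (j+1), by omega⟩ := by
      show c _ = c (Fin.succ _)
      congr 1
      apply Fin.ext
      simp [Fin.succ]
      omega
    rw [hent]

end AuxLemmas

lemma hseq_even (n : ℕ) (c : Clan n) (hJ : Jset n c = ∅) :
    ∀ k, k ≤ n → hseq n c k < k → hseq n c k % 2 = 0 := by
  intro k
  induction k with
  | zero => intro _ h; omega
  | succ k ih =>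
    intro hk hlt
    have hn : 0 < n := by omega
    have hle : hseq n c k ≤ k := hseq_le n c k
    rw [hseq_succ n hn c k] at hlt ⊢
    by_cases hb : c ⟨n - (k+1), by omega⟩ = false
    · rw [if_pos hb] at hlt ⊢
      rcases Nat.lt_or_ge (hseq n c k) k with h | h
      · exact ih (by omega) h
      · have heq : hseq n c k = k := by omega
        -- if k were odd, k ∈ Jset n c, contradiction
        have hkeven : k % 2 = 0 := by
          by_contra hodd
          have hmem : k ∈ Jset n c := by
            refine ⟨by omega, by omega, by omega, heq, ?_⟩
            intro h'
            have : (⟨n - k - 1, h'⟩ : Fin n) = ⟨n - (k+1), by omega⟩ := by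
              apply Fin.ext; simp; omega
            rw [this]; exact hb
          rw [hJ] at hmem
          exact hmem
        omega
    · rw [if_neg hb] at hlt ⊢
      by_cases h1 : hseq n c k = k
      · rw [if_pos h1] at hlt; omega
      · rw [if_neg h1] at hlt ⊢
        by_cases h2 : hseq n c k + 1 ≤ k
        · rw [if_pos h2] at hlt ⊢
          have := ih (by omega) (by omega)
          omega
        · omega

lemma Jset_succ_empty (n : ℕ) (c : Clan (n+1)) :
    Jset (n+1) c = ∅ ↔
      Jset n (fun i => c i.succ) = ∅ ∧
        ¬(n % 2 = 1 ∧ hseq n (fun i => c i.succ) n = n ∧ c 0 = false) := by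
  rw [Set.eq_empty_iff_forall_notMem, Set.eq_empty_iff_forall_notMem]
  constructor
  · intro H
    constructor
    · intro j hj
      obtain ⟨h1, h2, h3, h4, h5⟩ := hj
      refine H j ⟨h1, h2, by omega, ?_, ?_⟩
      · rw [hseq_tail n c j (by omega)]; exact h4
      · intro h'
        have hnj : n + 1 - j - 1 = (n - j - 1) + 1 := by omega
        have : (⟨n + 1 - j - 1, h'⟩ : Fin (n+1)) = Fin.succ ⟨n - j - 1, by omega⟩ := by
          apply Fin.ext; simp [Fin.succ]; omega
        rw [this]
        exact h5 (by omega)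
    · rintro ⟨h1, h2, h3⟩
      refine H n ⟨h1, by omega, by omega, ?_, ?_⟩
      · rw [hseq_tail n c n le_rfl]; exact h2
      · intro h'
        have : (⟨n + 1 - n - 1, h'⟩ : Fin (n+1)) = 0 := by
          apply Fin.ext; simp only [Fin.val_zero]; omega
        rw [this]; exact h3
  · rintro ⟨H1, H2⟩ j hj
    obtain ⟨h1, h2, h3, h4, h5⟩ := hj
    rcases Nat.lt_or_ge j n with hlt | hge
    · refine H1 j ⟨h1, h2, by omega, ?_, ?_⟩
      · rw [← hseq_tail n c j (by omega)]; exact h4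
      · intro h'
        show c (Fin.succ ⟨n - j - 1, h'⟩) = false
        have : Fin.succ (⟨n - j - 1, h'⟩ : Fin n) = ⟨n + 1 - j - 1, by omega⟩ := by
          apply Fin.ext; simp [Fin.succ]; omega
        rw [this]
        exact h5 (by omega)
    · have hjn : j = n := by omega
      rw [hjn] at h4 h5
      refine H2 ⟨by omega, ?_, ?_⟩
      · rw [← hseq_tail n c n le_rfl]; exact h4
      · have := h5 (by omega)
        have h0 : (⟨n + 1 - n - 1, by omega⟩ : Fin (n+1)) = 0 := by
          apply Fin.ext; simp only [Fin.val_zero]; omega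
        rw [h0] at this; exact this

lemma cons_tail_eq (n : ℕ) (c : Clan (n+1)) (b : Bool) (hb : c 0 = b) :
    Fin.cons b (fun i => c i.succ) = c := by
  rw [← hb]
  exact Fin.cons_self_tail c

lemma tail_cons_eq (n : ℕ) (b : Bool) (d : Clan n) :
    (fun i : Fin n => (Fin.cons b d : Clan (n+1)) i.succ) = d := by
  funext i
  exact Fin.cons_succ (α := fun _ => Bool) b d i

lemma ncard_cons_split (n : ℕ) (S : Set (Clan (n+1))) (Qt Qf : Set (Clan n))
    (ht : ∀ c : Clan (n+1), c 0 = true → (c ∈ S ↔ (fun i => c i.succ) ∈ Qt))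
    (hf : ∀ c : Clan (n+1), c 0 = false → (c ∈ S ↔ (fun i => c i.succ) ∈ Qf)) :
    S.ncard = Qt.ncard + Qf.ncard := by
  have hS : S = (Fin.cons true '' Qt) ∪ (Fin.cons false '' Qf) := by
    ext c
    constructor
    · intro hc
      cases hb : c 0 with
      | false =>
        right
        exact ⟨fun i => c i.succ, (hf c hb).mp hc, cons_tail_eq n c false hb⟩
      | true =>
        left
        exact ⟨fun i => c i.succ, (ht c hb).mp hc, cons_tail_eq n c true hb⟩
    · rintro (⟨d, hd, rfl⟩ | ⟨d, hd, rfl⟩)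
      · refine (ht _ (Fin.cons_zero _ _)).mpr ?_
        rw [tail_cons_eq]; exact hd
      · refine (hf _ (Fin.cons_zero _ _)).mpr ?_
        rw [tail_cons_eq]; exact hd
  rw [hS, Set.ncard_union_eq ?hdisj (Set.toFinite _) (Set.toFinite _),
    Set.ncard_image_of_injective _ (Fin.cons_right_injective _),
    Set.ncard_image_of_injective _ (Fin.cons_right_injective _)]
  case hdisj =>
    rw [Set.disjoint_left]
    rintro c ⟨d, _, rfl⟩ ⟨e, _, he⟩
    have h1 : (Fin.cons true d : Clan (n+1)) 0 = true := Fin.cons_zero _ _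
    rw [← he] at h1
    rw [Fin.cons_zero] at h1
    exact Bool.false_ne_true h1

lemma Ncount_succ_even (n : ℕ) (hn : n % 2 = 0) : Ncount (n+1) = 2 * Ncount n := by
  rw [Ncount, Ncount,
    ncard_cons_split n _ {c | Jset n c = ∅} {c | Jset n c = ∅} ?ht ?hf]
  · ring
  case ht =>
    intro c _
    rw [Set.mem_setOf_eq, Set.mem_setOf_eq, Jset_succ_empty]
    exact ⟨fun h => h.1, fun h => ⟨h, by rintro ⟨h1, _⟩; omega⟩⟩
  case hf =>
    intro c _
    rw [Set.mem_setOf_eq, Set.mem_setOf_eq, Jset_succ_empty]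
    exact ⟨fun h => h.1, fun h => ⟨h, by rintro ⟨h1, _⟩; omega⟩⟩

lemma Ncount_succ_odd (n : ℕ) (hn : n % 2 = 1) :
    Ncount (n+1) + Ncj n n = 2 * Ncount n := by
  have e1 : Ncount (n+1) = Ncount n
      + {c : Clan n | Jset n c = ∅ ∧ hseq n c n ≠ n}.ncard := by
    rw [Ncount, Ncount,
      ncard_cons_split n _ {c | Jset n c = ∅}
        {c | Jset n c = ∅ ∧ hseq n c n ≠ n} ?ht ?hf]
    case ht =>
      intro c hb
      rw [Set.mem_setOf_eq, Set.mem_setOf_eq, Jset_succ_empty]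
      constructor
      · exact fun h => h.1
      · intro h
        refine ⟨h, ?_⟩
        rintro ⟨_, _, h0⟩
        rw [hb] at h0
        exact (by decide : (true : Bool) ≠ false) h0
    case hf =>
      intro c hb
      rw [Set.mem_setOf_eq, Set.mem_setOf_eq, Jset_succ_empty]
      constructor
      · rintro ⟨h1, h2⟩
        exact ⟨h1, fun hh => h2 ⟨hn, hh, hb⟩⟩
      · rintro ⟨h1, h2⟩
        exact ⟨h1, by rintro ⟨_, hh, _⟩; exact h2 hh⟩
  have e2 : Ncount n = Ncj n n
      + {c : Clan n | Jset n c = ∅ ∧ hseq n c n ≠ n}.ncard := by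
    rw [Ncount, Ncj]
    rw [← Set.ncard_union_eq ?hd (Set.toFinite _) (Set.toFinite _)]
    · congr 1
      ext c
      simp only [Set.mem_setOf_eq, Set.mem_union]
      constructor
      · intro h
        by_cases hh : hseq n c n = n
        · exact Or.inl ⟨h, hh⟩
        · exact Or.inr ⟨h, hh⟩
      · rintro (⟨h, _⟩ | ⟨h, _⟩) <;> exact h
    case hd =>
      rw [Set.disjoint_left]
      rintro c ⟨_, h1⟩ ⟨_, h2⟩
      exact h2 h1
  omega

lemma Ncj_succ (n : ℕ) (hn : n % 2 = 0) : Ncj (n+1) (n+1) = Ncj n n := by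
  rw [Ncj, Ncj]
  have himg : {c : Clan (n+1) | Jset (n+1) c = ∅ ∧ hseq (n+1) c (n+1) = n+1}
      = Fin.cons true '' {c : Clan n | Jset n c = ∅ ∧ hseq n c n = n} := by
    ext c
    simp only [Set.mem_setOf_eq, Set.mem_image]
    have h0 : (⟨n + 1 - (n+1), by omega⟩ : Fin (n+1)) = 0 := by
      apply Fin.ext; simp only [Fin.val_zero]; omega
    have hstep := hseq_succ (n+1) (Nat.succ_pos n) c n
    rw [hseq_tail n c n le_rfl] at hstep
    simp only [h0] at hstep
    set p := hseq n (fun i => c i.succ) n with hp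
    have hple : p ≤ n := hseq_le n _ n
    constructor
    · rintro ⟨hJ, hh⟩
      have hJ' := (Jset_succ_empty n c).mp hJ
      rw [hstep] at hh
      cases hb : c 0 with
      | false => rw [if_pos hb] at hh; omega
      | true =>
        rw [if_neg (by rw [hb]; exact (by decide : (true : Bool) ≠ false))] at hh
        have hpn : p = n := by
          by_cases h1 : p = n
          · exact h1
          · rw [if_neg h1] at hh
            by_cases h2 : p + 1 ≤ n
            · rw [if_pos h2] at hh
              have hpe : p % 2 = 0 :=
                hseq_even n (fun i => c i.succ) hJ'.1 n le_rfl (by omega)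
              omega
            · omega
        exact ⟨fun i => c i.succ, ⟨hJ'.1, hpn⟩, cons_tail_eq n c true hb⟩
    · rintro ⟨d, ⟨hJd, hhd⟩, rfl⟩
      have hpd : p = n := by rw [hp, tail_cons_eq]; exact hhd
      refine ⟨?_, ?_⟩
      · refine (Jset_succ_empty n _).mpr ⟨?_, ?_⟩
        · rw [tail_cons_eq]; exact hJd
        · rintro ⟨h1, _⟩; omega
      · rw [hstep, if_neg (by rw [Fin.cons_zero]; exact (by decide : (true : Bool) ≠ false)),
          if_pos hpd, hpd]
  rw [himg, Set.ncard_image_of_injective _ (Fin.cons_right_injective _)]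

/-- `N(n) = 2 N(n-1)` if `n` is odd, and `N(n) = 4 N(n-2) - N(n-2, n-2)`
if `n` is even. -/
theorem stmt12 (n : ℕ) (hn : 1 ≤ n) :
    (Odd n → Ncount n = 2 * Ncount (n - 1)) ∧
    (Even n → (Ncount n : ℤ) = 4 * Ncount (n - 2) - Ncj (n - 2) (n - 2)) := by
  constructor
  · intro hodd
    obtain ⟨m, rfl⟩ : ∃ m, n = m + 1 := ⟨n - 1, by omega⟩
    have hm : m % 2 = 0 := by
      have := Nat.odd_iff.mp hodd; omega
    simpa using Ncount_succ_even m hm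
  · intro heven
    have h2 : 2 ≤ n := by
      have := Nat.even_iff.mp heven; omega
    obtain ⟨m, rfl⟩ : ∃ m, n = m + 2 := ⟨n - 2, by omega⟩
    have hm : m % 2 = 0 := by
      have := Nat.even_iff.mp heven; omega
    have e1 : Ncount (m+2) + Ncj (m+1) (m+1) = 2 * Ncount (m+1) := Ncount_succ_odd (m+1) (by omega)
    have e2 := Ncount_succ_even m hm
    have e3 := Ncj_succ m hm
    have hsub : m + 2 - 2 = m := by omega
    rw [hsub]
    omega
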